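/- The central fiber p^{-1}(0) of p: Ξ_{(\vec{s}_0,…,\vec{s}_k)} → ℂ, as a set, is the union over i = 0,…,k of the preimages of the coordinate hyperplanes {λ_i = 0}, and it has exactly n_0 ⋯ n_k · (1/n_0 + ⋯ + 1/n_k) irreducible components, with n_0 ⋯ n_{i-1} n_{i+1} ⋯ n_k of them contained in the preimage of {λ_i = 0}; each such component is homeomorphic to ℂ^k. -/

import Mathlib

/-- The number of orbits of the diagonal translation action of `ℤ` on `∏ j, ZMod (s j)`. -/
noncomputable def diagOrbitCount (n : ℕ) (s : Fin n → ℕ) : ℕ :=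
  Nat.card (Quot (fun e₁ e₂ : ∀ j : Fin n, ZMod (s j) =>
    ∃ m : ℤ, ∀ j, e₂ j = e₁ j + (m : ZMod (s j))))

/-- The total space `Ξ_{(\vec s_0,…,\vec s_k)}`. -/
abbrev XiProd (k : ℕ) (I : Fin (k + 1) → ℕ)
    (s : (i : Fin (k + 1)) → Fin (I i) → ℕ) : Type :=
  {x : (i : Fin (k + 1)) → (Fin (I i) → ℂ) × ℂ // ∀ i j, (x i).1 j ^ s i j = (x i).2}

open Topology Complex
section Curve
variable (n : ℕ) (s : Fin n → ℕ)

noncomputable def cL : ℕ := Finset.univ.lcm s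

noncomputable def cc (j : Fin n) : ℕ := cL n s / s j

noncomputable def zet : ℂ := Complex.exp (2 * Real.pi * Complex.I / (cL n s))

theorem cL_pos (hs : ∀ j, 0 < s j) : 0 < cL n s := by
  rcases Nat.eq_zero_or_pos (cL n s) with h | h
  · rw [cL, Finset.lcm_eq_zero_iff] at h
    obtain ⟨j, -, hj⟩ := h
    exact absurd hj (hs j).ne'
  · exact h

theorem s_dvd_cL (j : Fin n) : s j ∣ cL n s := Finset.dvd_lcm (Finset.mem_univ j)

theorem s_mul_cc (j : Fin n) : s j * cc n s j = cL n s :=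
  Nat.mul_div_cancel' (s_dvd_cL n s j)

theorem cc_pos (hs : ∀ j, 0 < s j) (j : Fin n) : 0 < cc n s j :=
  Nat.div_pos (Nat.le_of_dvd (cL_pos n s hs) (s_dvd_cL n s j)) (hs j)

theorem zet_prim (hs : ∀ j, 0 < s j) : IsPrimitiveRoot (zet n s) (cL n s) :=
  Complex.isPrimitiveRoot_exp _ (cL_pos n s hs).ne'

theorem zet_ne_zero (hs : ∀ j, 0 < s j) : zet n s ≠ 0 :=
  (zet_prim n s hs).ne_zero (cL_pos n s hs).ne'

theorem zet_pow_cL (hs : ∀ j, 0 < s j) : zet n s ^ cL n s = 1 :=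
  (zet_prim n s hs).pow_eq_one

/-- the parametrization of the component indexed by `e`. -/
noncomputable def curve (e : ∀ j, ZMod (s j)) (t : ℂ) : (Fin n → ℂ) × ℂ :=
  (fun j => zet n s ^ ((e j).val * cc n s j) * t ^ cc n s j, t ^ cL n s)

theorem curve_mem (hs : ∀ j, 0 < s j) (e : ∀ j, ZMod (s j)) (t : ℂ) (j : Fin n) :
    (curve n s e t).1 j ^ s j = (curve n s e t).2 := by
  simp only [curve, mul_pow, ← pow_mul]
  rw [mul_comm (cc n s j) (s j), s_mul_cc, mul_comm ((e j).val * cc n s j) (s j),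
    ← mul_assoc, mul_comm (s j) (e j).val, mul_assoc, s_mul_cc]
  rw [mul_comm ((e j).val), pow_mul, zet_pow_cL n s hs, one_pow, one_mul]

/-- exponent congruence gives equal zeta powers -/
theorem zet_zpow_eq (hs : ∀ j, 0 < s j) {a b : ℤ} (h : (cL n s : ℤ) ∣ a - b) :
    zet n s ^ a = zet n s ^ b := by
  have hz := zet_ne_zero n s hs
  have := ((zet_prim n s hs).zpow_eq_one_iff_dvd (a - b)).2 h
  rw [zpow_sub₀ hz, div_eq_one_iff_eq (zpow_ne_zero _ hz)] at this
  exact this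

theorem curve_continuous (e : ∀ j, ZMod (s j)) : Continuous (curve n s e) := by
  refine Continuous.prodMk (continuous_pi fun j => ?_) (continuous_pow _)
  exact continuous_const.mul (continuous_pow _)

theorem curve_injective (hs : ∀ j, 0 < s j) (e : ∀ j, ZMod (s j)) :
    Function.Injective (curve n s e) := by
  intro t t' h
  have hL : (curve n s e t).2 = (curve n s e t').2 := by rw [h]
  simp only [curve] at hL
  rcases eq_or_ne t 0 with rfl | ht
  · rw [zero_pow (cL_pos n s hs).ne'] at hL
    exact (pow_eq_zero_iff (cL_pos n s hs).ne' |>.1 hL.symm).symm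
  · have ht' : t' ≠ 0 := by
      intro h0
      rw [h0, zero_pow (cL_pos n s hs).ne'] at hL
      exact ht (pow_eq_zero_iff (cL_pos n s hs).ne' |>.1 hL)
    -- u := t'/t has u^(cc j) = 1 for all j and u^L = 1
    set u : ℂ := t' / t with hu
    have huL : u ^ cL n s = 1 := by
      rw [hu, div_pow, hL, div_self (pow_ne_zero _ ht')]
    have hucc : ∀ j, u ^ cc n s j = 1 := by
      intro j
      have hj : (curve n s e t).1 j = (curve n s e t').1 j := by rw [h]
      simp only [curve] at hj
      have := mul_left_cancel₀ (pow_ne_zero _ (zet_ne_zero n s hs)) hj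
      rw [hu, div_pow, ← this, div_self (pow_ne_zero _ ht)]
    set d := orderOf u with hd
    have hdL : d ∣ cL n s := orderOf_dvd_of_pow_eq_one huL
    have hd0 : d ≠ 0 := by
      intro h0
      rw [h0, zero_dvd_iff] at hdL
      exact (cL_pos n s hs).ne' hdL
    have hdcc : ∀ j, d ∣ cc n s j := fun j => orderOf_dvd_of_pow_eq_one (hucc j)
    -- L divides L / d
    have hdiv : ∀ j, s j ∣ cL n s / d := by
      intro j
      refine ⟨cc n s j / d, ?_⟩
      rw [← Nat.mul_div_assoc _ (hdcc j), s_mul_cc]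
    have hLdvd : cL n s ∣ cL n s / d := Finset.lcm_dvd fun j _ => hdiv j
    have hle : cL n s / d ∣ cL n s := Nat.div_dvd_of_dvd (dvd_trans hdL (dvd_refl _))
    have heq : cL n s / d = cL n s := Nat.dvd_antisymm hle hLdvd
    have : d = 1 := by
      have h2 : d * (cL n s / d) = cL n s := Nat.mul_div_cancel' hdL
      rw [heq] at h2
      exact Nat.eq_of_mul_eq_mul_right (cL_pos n s hs) (by rw [h2, one_mul])
    have hu1 : u = 1 := orderOf_eq_one_iff.1 this
    rw [hu, div_eq_one_iff_eq ht] at hu1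
    exact hu1.symm

end Curve

section Curve2
variable (n : ℕ) (s : Fin n → ℕ)

theorem zmod_dvd (hs : ∀ j, 0 < s j) {e f : ∀ j, ZMod (s j)} {m : ℤ} (j : Fin n)
    (h : f j = e j + (m : ZMod (s j))) :
    (s j : ℤ) ∣ ((f j).val : ℤ) - ((e j).val : ℤ) - m := by
  haveI : NeZero (s j) := ⟨(hs j).ne'⟩
  rw [← ZMod.intCast_zmod_eq_zero_iff_dvd]
  push_cast
  rw [ZMod.natCast_val, ZMod.natCast_val, ZMod.cast_id, ZMod.cast_id, h]
  ring

theorem curve_translate (hs : ∀ j, 0 < s j) {e f : ∀ j, ZMod (s j)} {m : ℤ}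
    (hf : ∀ j, f j = e j + (m : ZMod (s j))) (t : ℂ) :
    curve n s f t = curve n s e (zet n s ^ m * t) := by
  have hz := zet_ne_zero n s hs
  refine Prod.ext (funext fun j => ?_) ?_
  · show zet n s ^ ((f j).val * cc n s j) * t ^ cc n s j
      = zet n s ^ ((e j).val * cc n s j) * (zet n s ^ m * t) ^ cc n s j
    rw [mul_pow, ← mul_assoc]
    congr 1
    rw [← zpow_natCast (zet n s) ((f j).val * cc n s j),
      ← zpow_natCast (zet n s) ((e j).val * cc n s j),
      ← zpow_natCast (zet n s ^ m) (cc n s j), ← zpow_mul, ← zpow_add₀ hz]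
    apply zet_zpow_eq n s hs
    have hd := zmod_dvd n s hs j (hf j)
    obtain ⟨y, hy⟩ := hd
    refine ⟨y, ?_⟩
    have hsc : (cL n s : ℤ) = (s j : ℤ) * (cc n s j : ℤ) := by
      rw [← Nat.cast_mul, s_mul_cc]
    push_cast
    rw [hsc]
    linear_combination (cc n s j : ℤ) * hy
  · show t ^ cL n s = (zet n s ^ m * t) ^ cL n s
    rw [mul_pow, ← zpow_natCast (zet n s ^ m) (cL n s), ← zpow_mul, mul_comm m,
      zpow_mul, zpow_natCast, zet_pow_cL n s hs, one_zpow, one_mul]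

theorem curve_range_subset (hs : ∀ j, 0 < s j) {e f : ∀ j, ZMod (s j)} {m : ℤ}
    (hf : ∀ j, f j = e j + (m : ZMod (s j))) :
    Set.range (curve n s f) ⊆ Set.range (curve n s e) := by
  rintro _ ⟨t, rfl⟩
  exact ⟨zet n s ^ m * t, (curve_translate n s hs hf t).symm⟩

theorem curve_range_eq (hs : ∀ j, 0 < s j) {e f : ∀ j, ZMod (s j)} {m : ℤ}
    (hf : ∀ j, f j = e j + (m : ZMod (s j))) :
    Set.range (curve n s f) = Set.range (curve n s e) := by
  refine subset_antisymm (curve_range_subset n s hs hf)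
    (curve_range_subset n s hs (m := -m) fun j => ?_)
  rw [hf j]
  push_cast
  ring

theorem curve_surj (hs : ∀ j, 0 < s j) (x : (Fin n → ℂ) × ℂ)
    (hx : ∀ j, x.1 j ^ s j = x.2) : ∃ e t, curve n s e t = x := by
  rcases eq_or_ne x.2 0 with h0 | h0
  · refine ⟨fun j => 0, 0, ?_⟩
    refine Prod.ext (funext fun j => ?_) ?_
    · show zet n s ^ _ * (0:ℂ) ^ cc n s j = x.1 j
      rw [zero_pow (cc_pos n s hs j).ne', mul_zero]
      have := hx j
      rw [h0] at this
      exact ((pow_eq_zero_iff (hs j).ne').1 this).symm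
    · show (0:ℂ) ^ cL n s = x.2
      rw [zero_pow (cL_pos n s hs).ne', h0]
  · obtain ⟨t, ht⟩ := IsAlgClosed.exists_pow_nat_eq x.2 (cL_pos n s hs)
    have htne : t ≠ 0 := by
      intro h; rw [h, zero_pow (cL_pos n s hs).ne'] at ht; exact h0 ht.symm
    have key : ∀ j, ∃ b : ℕ, x.1 j = zet n s ^ (b * cc n s j) * t ^ cc n s j := by
      intro j
      set u : ℂ := x.1 j / t ^ cc n s j with hu
      have hus : u ^ s j = 1 := by
        rw [hu, div_pow, ← pow_mul, mul_comm (cc n s j), s_mul_cc, ht, hx j,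
          div_self h0]
      have huL : u ^ cL n s = 1 := by
        rw [← s_mul_cc n s j, pow_mul, hus, one_pow]
      haveI : NeZero (cL n s) := ⟨(cL_pos n s hs).ne'⟩
      obtain ⟨a, _, ha⟩ := (zet_prim n s hs).eq_pow_of_pow_eq_one huL
      have hdvd : cL n s ∣ a * s j := by
        apply (zet_prim n s hs).dvd_of_pow_eq_one
        rw [pow_mul, ha, hus]
      have hcc : cc n s j ∣ a := by
        have : cc n s j * s j ∣ a * s j := by
          rwa [mul_comm (cc n s j), s_mul_cc]
        exact (Nat.mul_dvd_mul_iff_right (hs j)).1 this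
      obtain ⟨b, hb⟩ := hcc
      refine ⟨b, ?_⟩
      rw [mul_comm b, ← hb, ha, hu, div_mul_cancel₀ _ (pow_ne_zero _ htne)]
    choose b hb using key
    refine ⟨fun j => (b j : ZMod (s j)), t, Prod.ext (funext fun j => ?_) ht⟩
    show zet n s ^ (((b j : ZMod (s j)).val) * cc n s j) * t ^ cc n s j = x.1 j
    rw [hb j]
    congr 1
    rw [← zpow_natCast (zet n s) (((b j : ZMod (s j)).val) * cc n s j),
      ← zpow_natCast (zet n s) (b j * cc n s j)]
    apply zet_zpow_eq n s hs
    haveI : NeZero (s j) := ⟨(hs j).ne'⟩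
    have : (s j : ℤ) ∣ (((b j : ZMod (s j)).val : ℤ) - (b j : ℤ)) := by
      rw [← ZMod.intCast_zmod_eq_zero_iff_dvd]
      push_cast
      rw [ZMod.natCast_val, ZMod.cast_id]
      ring
    obtain ⟨y, hy⟩ := this
    refine ⟨y, ?_⟩
    have hsc : (cL n s : ℤ) = (s j : ℤ) * (cc n s j : ℤ) := by
      rw [← Nat.cast_mul, s_mul_cc]
    push_cast
    rw [hsc]
    linear_combination (cc n s j : ℤ) * hy

theorem curve_range_le (hs : ∀ j, 0 < s j) {e f : ∀ j, ZMod (s j)}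
    (h : Set.range (curve n s e) ⊆ Set.range (curve n s f)) :
    ∃ m : ℤ, ∀ j, e j = f j + (m : ZMod (s j)) := by
  obtain ⟨t, ht⟩ := h ⟨1, rfl⟩
  have ht2 : t ^ cL n s = 1 := by
    have := congrArg Prod.snd ht
    simpa [curve] using this
  haveI : NeZero (cL n s) := ⟨(cL_pos n s hs).ne'⟩
  obtain ⟨a, _, ha⟩ := (zet_prim n s hs).eq_pow_of_pow_eq_one ht2
  refine ⟨a, fun j => ?_⟩
  have hj := congrFun (congrArg Prod.fst ht) j
  simp only [curve, one_pow, mul_one] at hj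
  -- hj : zet ^ ((f j).val * cc j) * t ^ cc j = zet ^ ((e j).val * cc j)
  rw [← ha, ← pow_mul, ← pow_add] at hj
  haveI : NeZero (s j) := ⟨(hs j).ne'⟩
  have hdvd : (cL n s : ℤ) ∣ (((f j).val : ℤ) * cc n s j + a * cc n s j
      - ((e j).val : ℤ) * cc n s j) := by
    have := (zet_prim n s hs).zpow_eq_one_iff_dvd
      ((((f j).val : ℤ) * cc n s j + a * cc n s j) - ((e j).val : ℤ) * cc n s j)
    apply this.1
    rw [zpow_sub₀ (zet_ne_zero n s hs), div_eq_one_iff_eq (zpow_ne_zero _ (zet_ne_zero n s hs))]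
    rw [show ((((f j).val : ℤ)) * cc n s j + (a : ℤ) * cc n s j)
        = (((f j).val * cc n s j + a * cc n s j : ℕ) : ℤ) by push_cast; ring,
      show (((e j).val : ℤ) * cc n s j) = (((e j).val * cc n s j : ℕ) : ℤ) by push_cast; ring,
      zpow_natCast, zpow_natCast, hj]
  -- deduce s j ∣ (f j).val + a - (e j).val
  have hsc : (cL n s : ℤ) = (s j : ℤ) * (cc n s j : ℤ) := by
    rw [← Nat.cast_mul, s_mul_cc]
  have hccne : (cc n s j : ℤ) ≠ 0 := Int.natCast_ne_zero.2 (cc_pos n s hs j).ne'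
  have hdvd2 : (s j : ℤ) ∣ (((f j).val : ℤ) + a - ((e j).val : ℤ)) := by
    have : (s j : ℤ) * (cc n s j : ℤ) ∣ ((((f j).val : ℤ) + a - ((e j).val : ℤ)) * cc n s j) := by
      rw [← hsc]
      convert hdvd using 1
      ring
    exact (mul_dvd_mul_iff_right hccne).1 this
  -- translate to ZMod equality
  have : ((((f j).val : ℤ) + a - ((e j).val : ℤ) : ℤ) : ZMod (s j)) = 0 := by
    rw [ZMod.intCast_zmod_eq_zero_iff_dvd]
    exact hdvd2
  push_cast at this
  rw [ZMod.natCast_val, ZMod.natCast_val, ZMod.cast_id, ZMod.cast_id] at this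
  have := sub_eq_zero.1 this
  rw [← this]
  push_cast
  ring

end Curve2

section Prod
variable (k : ℕ) (I : Fin (k + 1) → ℕ) (s : (i : Fin (k + 1)) → Fin (I i) → ℕ)

def XRel (i : Fin (k + 1)) (e₁ e₂ : ∀ j, ZMod (s i j)) : Prop :=
  ∃ m : ℤ, ∀ j, e₂ j = e₁ j + (m : ZMod (s i j))

abbrev XQ (i : Fin (k + 1)) : Type := Quot (XRel k I s i)

theorem xrel_equivalence (i : Fin (k + 1)) : Equivalence (XRel k I s i) := by
  constructor
  · exact fun e => ⟨0, by simp⟩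
  · rintro e f ⟨m, h⟩
    exact ⟨-m, fun j => by rw [h j]; push_cast; ring⟩
  · rintro e f g ⟨m, h⟩ ⟨m', h'⟩
    exact ⟨m + m', fun j => by rw [h' j, h j]; push_cast; ring⟩

theorem xq_eq_iff {i : Fin (k + 1)} {e f : ∀ j, ZMod (s i j)} :
    Quot.mk (XRel k I s i) e = Quot.mk (XRel k I s i) f ↔ XRel k I s i e f := by
  rw [Quot.eq, Equivalence.eqvGen_iff (xrel_equivalence k I s i)]

abbrev XD : Type :=
  Σ i : Fin (k + 1), (i' : {x : Fin (k + 1) // x ≠ i}) → XQ k I s i'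

noncomputable def xsig (i : Fin (k + 1)) : {x : Fin (k + 1) // x ≠ i} ≃ Fin k :=
  Fintype.equivFinOfCardEq (by simp [Fintype.card_subtype_compl])

noncomputable def xPhi (d : XD k I s) (t : Fin k → ℂ) :
    ∀ i', (Fin (I i') → ℂ) × ℂ := fun i' =>
  if h : i' = d.1 then 0
  else curve (I i') (s i') (d.2 ⟨i', h⟩).out (t (xsig k d.1 ⟨i', h⟩))

theorem xPhi_mem (hss : ∀ i j, 0 < s i j) (d : XD k I s) (t : Fin k → ℂ) :
    ∀ i' j, (xPhi k I s d t i').1 j ^ s i' j = (xPhi k I s d t i').2 := by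
  intro i' j
  rw [xPhi]
  split
  · show (0:ℂ) ^ s i' j = 0
    exact zero_pow (hss i' j).ne'
  · exact curve_mem (I i') (s i') (hss i') _ _ j

theorem xPhi_cont (d : XD k I s) : Continuous (xPhi k I s d) := by
  refine continuous_pi fun i' => ?_
  by_cases h : i' = d.1
  · simp only [xPhi, dif_pos h]
    exact continuous_const
  · simp only [xPhi, dif_neg h]
    exact (curve_continuous (I i') (s i') _).comp (continuous_apply _)

theorem xPhi_apply_ne (d : XD k I s) (t : Fin k → ℂ) (i' : {x : Fin (k+1) // x ≠ d.1}) :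
    xPhi k I s d t i' = curve (I i') (s i') (d.2 i').out (t (xsig k d.1 i')) := by
  rw [xPhi, dif_neg i'.2]

theorem xPhi_inj (hss : ∀ i j, 0 < s i j) (d : XD k I s) :
    Function.Injective (xPhi k I s d) := by
  intro t t' h
  funext j
  set i' : {x : Fin (k+1) // x ≠ d.1} := (xsig k d.1).symm j with hi'
  have h1 := congrFun h (i' : Fin (k + 1))
  rw [xPhi_apply_ne, xPhi_apply_ne] at h1
  have := curve_injective (I i') (s i') (hss i') _ h1
  rwa [hi', Equiv.apply_symm_apply] at this

theorem xPhi_isClosedMap (hss : ∀ i j, 0 < s i j) (d : XD k I s) :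
    IsClosedMap (xPhi k I s d) := by
  have hproper : IsProperMap (xPhi k I s d) := by
    rw [isProperMap_iff_isCompact_preimage]
    refine ⟨xPhi_cont k I s d, fun K hK => ?_⟩
    obtain ⟨R, hR⟩ := hK.isBounded.exists_norm_le
    refine IsCompact.of_isClosed_subset (isCompact_closedBall (0 : Fin k → ℂ) (max 1 R))
      (hK.isClosed.preimage (xPhi_cont k I s d)) ?_
    intro t ht
    rw [Metric.mem_closedBall, dist_zero_right]
    refine pi_norm_le_iff_of_nonneg (le_trans zero_le_one (le_max_left 1 R)) |>.2 fun j => ?_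
    set i' : {x : Fin (k+1) // x ≠ d.1} := (xsig k d.1).symm j with hi'
    have h1 : xPhi k I s d t i' = curve (I i') (s i') (d.2 i').out (t j) := by
      rw [xPhi_apply_ne, hi', Equiv.apply_symm_apply]
    have h2 : ‖(t j) ^ cL (I i') (s i')‖ ≤ R := by
      calc ‖(t j) ^ cL (I i') (s i')‖ = ‖(xPhi k I s d t i').2‖ := by rw [h1]; rfl
        _ ≤ ‖xPhi k I s d t (i' : Fin (k+1))‖ := norm_snd_le _
        _ ≤ ‖xPhi k I s d t‖ := norm_le_pi_norm _ _
        _ ≤ R := hR _ ht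
    rcases le_or_gt ‖t j‖ 1 with h3 | h3
    · exact le_trans h3 (le_max_left 1 R)
    · refine le_trans ?_ (le_max_right 1 R)
      calc ‖t j‖ ≤ ‖t j‖ ^ cL (I i') (s i') :=
            le_self_pow₀ h3.le (cL_pos (I i') (s i') (hss i')).ne'
        _ = ‖(t j) ^ cL (I i') (s i')‖ := (norm_pow _ _).symm
        _ ≤ R := h2
  exact hproper.isClosedMap

noncomputable def xPhiX (hss : ∀ i j, 0 < s i j) (d : XD k I s) (t : Fin k → ℂ) :
    XiProd k I s := ⟨xPhi k I s d t, xPhi_mem k I s hss d t⟩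

theorem xPhiX_isClosedEmbedding (hss : ∀ i j, 0 < s i j) (d : XD k I s) :
    Topology.IsClosedEmbedding (xPhiX k I s hss d) := by
  refine Topology.IsClosedEmbedding.of_continuous_injective_isClosedMap
    ((xPhi_cont k I s d).subtype_mk _) ?_ ?_
  · intro t t' h
    exact xPhi_inj k I s hss d (congrArg Subtype.val h)
  · intro F hF
    have h1 : xPhiX k I s hss d '' F
        = Subtype.val ⁻¹' (xPhi k I s d '' F) := by
      ext x
      simp only [Set.mem_image, Set.mem_preimage, xPhiX, Subtype.ext_iff]
    rw [h1]
    exact (xPhi_isClosedMap k I s hss d F hF).preimage continuous_subtype_val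

end Prod

section Prod2
variable (k : ℕ) (I : Fin (k + 1) → ℕ) (s : (i : Fin (k + 1)) → Fin (I i) → ℕ)

theorem xPhi_apply_self (d : XD k I s) (t : Fin k → ℂ) : xPhi k I s d t d.1 = 0 :=
  dif_pos rfl

theorem xPhiX_val (hss : ∀ i j, 0 < s i j) (d : XD k I s) (t : Fin k → ℂ) :
    (xPhiX k I s hss d t).1 = xPhi k I s d t := rfl

theorem xPhi_snd_one (hss : ∀ i j, 0 < s i j) (d : XD k I s) {i' : Fin (k + 1)}
    (h : i' ≠ d.1) : (xPhi k I s d (fun _ => 1) i').2 = 1 := by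
  rw [xPhi_apply_ne k I s d _ ⟨i', h⟩]
  show (1:ℂ) ^ cL (I i') (s i') = 1
  exact one_pow _

theorem xPhiX_fst_eq (hss : ∀ i j, 0 < s i j) (d : XD k I s) :
    ∀ d' : XD k I s,
      Set.range (xPhiX k I s hss d) ⊆ Set.range (xPhiX k I s hss d') → d.1 = d'.1 := by
  intro d' h
  by_contra hne
  obtain ⟨t', ht'⟩ := h ⟨fun _ => 1, rfl⟩
  have h1 := congrArg (fun y : XiProd k I s => (y.1 d'.1).2) ht'
  simp only [xPhiX] at h1
  rw [xPhi_apply_self] at h1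
  rw [xPhi_snd_one k I s hss d (Ne.symm hne)] at h1
  simp at h1

theorem xPhiX_range_subset_imp (hss : ∀ i j, 0 < s i j) (d d' : XD k I s)
    (h : Set.range (xPhiX k I s hss d) ⊆ Set.range (xPhiX k I s hss d')) : d = d' := by
  obtain ⟨i, q⟩ := d
  obtain ⟨i2, q'⟩ := d'
  have h1 : i = i2 := xPhiX_fst_eq k I s hss ⟨i, q⟩ ⟨i2, q'⟩ h
  subst h1
  refine Sigma.ext rfl (heq_of_eq (funext fun i' => ?_))
  have hsub : Set.range (curve (I i') (s i') ((q i').out))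
      ⊆ Set.range (curve (I i') (s i') ((q' i').out)) := by
    rintro _ ⟨u, rfl⟩
    obtain ⟨t', ht'⟩ := h ⟨fun _ => u, rfl⟩
    have h2 := congrArg (fun y : XiProd k I s => y.1 i') ht'
    simp only [xPhiX] at h2
    rw [xPhi_apply_ne k I s ⟨i, q'⟩ t' i', xPhi_apply_ne k I s ⟨i, q⟩ _ i'] at h2
    exact ⟨_, h2⟩
  obtain ⟨m, hm⟩ := curve_range_le (I i') (s i') (hss i') hsub
  have : Quot.mk (XRel k I s i') ((q' i').out) = Quot.mk (XRel k I s i') ((q i').out) :=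
    Quot.sound ⟨m, hm⟩
  rw [Quot.out_eq, Quot.out_eq] at this
  exact this.symm

theorem cover (hss : ∀ i j, 0 < s i j) (x : XiProd k I s) (i : Fin (k + 1))
    (hx : (x.1 i).2 = 0) :
    ∃ d : XD k I s, d.1 = i ∧ x ∈ Set.range (xPhiX k I s hss d) := by
  have key : ∀ i' : {x : Fin (k + 1) // x ≠ i}, ∃ (e : ∀ j, ZMod (s i' j)) (t : ℂ),
      curve (I i') (s i') e t = x.1 i' :=
    fun i' => curve_surj (I i') (s i') (hss i') (x.1 i') (x.2 i')
  choose E T hET using key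
  set q : (i' : {x : Fin (k + 1) // x ≠ i}) → XQ k I s i' :=
    fun i' => Quot.mk _ (E i') with hq
  have key2 : ∀ i' : {x : Fin (k + 1) // x ≠ i}, ∃ t : ℂ,
      curve (I i') (s i') ((q i').out) t = x.1 i' := by
    intro i'
    have hrel : XRel k I s i' ((q i').out) (E i') := by
      rw [← xq_eq_iff k I s, Quot.out_eq]
    have := curve_range_subset (I i') (s i') (hss i') hrel.choose_spec
      (Set.mem_range_self (f := curve (I i') (s i') (E i')) (T i'))
    obtain ⟨t, ht⟩ := this
    exact ⟨t, ht.trans (hET i')⟩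
  choose T2 hT2 using key2
  refine ⟨⟨i, q⟩, rfl, ⟨fun j => T2 ((xsig k i).symm j), ?_⟩⟩
  apply Subtype.ext
  funext i'
  by_cases h : i' = i
  · subst h
    rw [xPhiX_val k I s hss ⟨i', q⟩ _,
      show xPhi k I s ⟨i', q⟩ (fun j => T2 ((xsig k i').symm j)) i' = 0 from
        xPhi_apply_self k I s ⟨i', q⟩ _]
    have h0 : ∀ jj, (x.1 i').1 jj = 0 := by
      intro jj
      have h2 := x.2 i' jj
      rw [hx] at h2
      exact (pow_eq_zero_iff (hss i' jj).ne').1 h2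
    exact (Prod.ext (funext fun jj => h0 jj) hx).symm
  · rw [xPhiX_val k I s hss ⟨i, q⟩ _]
    show xPhi k I s ⟨i, q⟩ _ i' = x.1 i'
    rw [xPhi_apply_ne k I s ⟨i, q⟩ _ ⟨i', h⟩]
    show curve (I i') (s i') ((q ⟨i', h⟩).out)
      (T2 ((xsig k i).symm (xsig k i ⟨i', h⟩))) = x.1 i'
    rw [Equiv.symm_apply_apply]
    exact hT2 ⟨i', h⟩

theorem subset_hyper_iff (hss : ∀ i j, 0 < s i j) (d : XD k I s) (i : Fin (k + 1)) :
    Set.range (xPhiX k I s hss d) ⊆ {x : XiProd k I s | (x.1 i).2 = 0} ↔ d.1 = i := by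
  constructor
  · intro h
    by_contra hne
    have := h ⟨fun _ => 1, rfl⟩
    simp only [Set.mem_setOf_eq, xPhiX] at this
    rw [xPhi_snd_one k I s hss d (Ne.symm hne)] at this
    exact one_ne_zero this
  · rintro rfl
    rintro _ ⟨t, rfl⟩
    show (xPhi k I s d t d.1).2 = 0
    rw [xPhi_apply_self]
    rfl

/-- fiber of a sigma type over the first component -/
def sigmaFiberEquiv' {α : Type*} {β : α → Type*} (i : α) :
    {d : Σ a, β a // d.1 = i} ≃ β i where
  toFun d := d.2 ▸ d.1.2
  invFun b := ⟨⟨i, b⟩, rfl⟩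
  left_inv := by rintro ⟨⟨a, b⟩, rfl⟩; rfl
  right_inv b := rfl

end Prod2

/-- The central fiber `p⁻¹(0)` is the union of the preimages of the coordinate
hyperplanes `{λ_i = 0}`, and it has exactly `∑_i ∏_{i'≠i} n_{i'}` irreducible components,
each homeomorphic to `ℂ^k`, with exactly `∏_{i'≠i} n_{i'}` of them contained in the
preimage of `{λ_i = 0}`. -/
theorem stmt4 (k : ℕ) (I : Fin (k + 1) → ℕ)
    (s : (i : Fin (k + 1)) → Fin (I i) → ℕ) (hs : ∀ i j, 0 < s i j) :
    {x : XiProd k I s | (∏ i, (x.1 i).2) = 0}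
        = ⋃ i : Fin (k + 1), {x : XiProd k I s | (x.1 i).2 = 0} ∧
    ∃ C : Fin (∑ i : Fin (k + 1),
          ∏ i' ∈ Finset.univ.erase i, diagOrbitCount (I i') (s i')) → Set (XiProd k I s),
      (⋃ m, C m) = {x : XiProd k I s | (∏ i, (x.1 i).2) = 0} ∧
      (∀ m, IsClosed (C m)) ∧
      (∀ m, Nonempty (↥(C m) ≃ₜ (Fin k → ℂ))) ∧
      (∀ m m', C m ⊆ C m' → m = m') ∧
      (∀ i : Fin (k + 1),
        Nat.card {m // C m ⊆ {x : XiProd k I s | (x.1 i).2 = 0}}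
          = ∏ i' ∈ Finset.univ.erase i, diagOrbitCount (I i') (s i')) := by
  haveI instNZ : ∀ (i : Fin (k + 1)) j, NeZero (s i j) := fun i j => ⟨(hs i j).ne'⟩
  haveI instFin : ∀ i : Fin (k + 1), Fintype (XQ k I s i) :=
    fun i => @Fintype.ofFinite _ (Quot.finite _)
  have hcardQ : ∀ i, diagOrbitCount (I i) (s i) = Fintype.card (XQ k I s i) := by
    intro i
    exact Nat.card_eq_fintype_card (α := XQ k I s i)
  have hprod : ∀ i, (∏ i' ∈ Finset.univ.erase i, diagOrbitCount (I i') (s i'))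
      = Fintype.card ((i' : {x : Fin (k + 1) // x ≠ i}) → XQ k I s i') := by
    intro i
    rw [Fintype.card_pi]
    rw [Finset.prod_subtype (Finset.univ.erase i) (p := fun x => x ≠ i)
      (fun x => by simp) (fun i' => diagOrbitCount (I i') (s i'))]
    exact Finset.prod_congr rfl fun i' _ => hcardQ i'
  have hcardD : Fintype.card (XD k I s)
      = ∑ i : Fin (k + 1), ∏ i' ∈ Finset.univ.erase i, diagOrbitCount (I i') (s i') := by
    rw [Fintype.card_sigma]
    exact Finset.sum_congr rfl fun i _ => (hprod i).symm
  set E : XD k I s ≃ Fin (∑ i : Fin (k + 1),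
      ∏ i' ∈ Finset.univ.erase i, diagOrbitCount (I i') (s i')) :=
    Fintype.equivFinOfCardEq hcardD with hE
  refine ⟨?_, fun m => Set.range (xPhiX k I s hs (E.symm m)), ?_, ?_, ?_, ?_, ?_⟩
  · ext x
    simp [Finset.prod_eq_zero_iff, Set.mem_iUnion]
  · ext x
    simp only [Set.mem_iUnion, Set.mem_setOf_eq]
    constructor
    · rintro ⟨m, t, rfl⟩
      apply Finset.prod_eq_zero (Finset.mem_univ (E.symm m).1)
      rw [xPhiX_val, xPhi_apply_self]
      rfl
    · intro hx
      rw [Finset.prod_eq_zero_iff] at hx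
      obtain ⟨i, -, hi⟩ := hx
      obtain ⟨d, hd1, hd2⟩ := cover k I s hs x i hi
      refine ⟨E d, ?_⟩
      rw [Equiv.symm_apply_apply]
      exact hd2
  · exact fun m => (xPhiX_isClosedEmbedding k I s hs (E.symm m)).isClosed_range
  · exact fun m => ⟨(Topology.IsEmbedding.toHomeomorph
      (xPhiX_isClosedEmbedding k I s hs (E.symm m)).toIsEmbedding).symm⟩
  · intro m m' h
    have := xPhiX_range_subset_imp k I s hs _ _ h
    exact E.symm.injective this
  · intro i
    have e1 : {m // Set.range (xPhiX k I s hs (E.symm m))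
        ⊆ {x : XiProd k I s | (x.1 i).2 = 0}} ≃ {m // (E.symm m).1 = i} :=
      Equiv.subtypeEquivRight fun m => subset_hyper_iff k I s hs _ i
    have e2 : {m // (E.symm m).1 = i} ≃ {d : XD k I s // d.1 = i} :=
      Equiv.subtypeEquiv E.symm fun m => Iff.rfl
    have e3 := sigmaFiberEquiv' (β := fun i : Fin (k + 1) =>
      (i' : {x : Fin (k + 1) // x ≠ i}) → XQ k I s i') i
    rw [Nat.card_congr ((e1.trans e2).trans e3), Nat.card_eq_fintype_card, ← hprod i]
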